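/- Every left R-module can be embedded as a Q-copure submodule of a Q-copure Baer injective module. -/

import Mathlib

universe u

variable {R : Type u}

/-- A linear map `f : A → B` is `Q`-copure if every module in `Q` is injective
relative to `f`. -/
def IsCopure [Ring R] (Q : ModuleCat.{u} R → Prop) {A B : Type u}
    [AddCommGroup A] [Module R A] [AddCommGroup B] [Module R B] (f : A →ₗ[R] B) : Prop :=
  ∀ M : ModuleCat.{u} R, Q M → ∀ g : A →ₗ[R] M, ∃ h : B →ₗ[R] M, ∀ a : A, h (f a) = g a

/-- A left ideal `I` of `R` is `Q`-copure if every module in `Q` is injective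
relative to the inclusion `I → R`. -/
def CopureIdeal [Ring R] (Q : ModuleCat.{u} R → Prop) (I : Ideal R) : Prop :=
  ∀ M : ModuleCat.{u} R, Q M → ∀ g : I →ₗ[R] M, ∃ h : R →ₗ[R] M, ∀ x : I, h x = g x

/-- `N` is `Q`-copure Baer injective if every homomorphism from a `Q`-copure
left ideal of `R` into `N` extends to `R`. -/
def CopureBaerInjective [Ring R] (Q : ModuleCat.{u} R → Prop) (N : Type*)
    [AddCommGroup N] [Module R N] : Prop :=
  ∀ I : Ideal R, CopureIdeal Q I → ∀ g : I →ₗ[R] N, ∃ h : R →ₗ[R] N, ∀ x : I, h x = g x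

namespace CopureEmbed

variable (R) in
inductive W (A : Type u) [Ring R] : Type u
  | base : A → W A
  | node : Ideal R → (R → ℕ → W A) → (R → ℕ → R) → (R → ℕ) → W A

variable [Ring R] {A : Type u} [AddCommGroup A] [Module R A]

abbrev Free (R : Type u) [Ring R] (A : Type u) : Type u := W R A →₀ R

noncomputable def ev (φw : R → ℕ → W R A) (φc : R → ℕ → R) (φn : R → ℕ) (x : R) :
    Free R A :=
  ∑ i ∈ Finset.range (φn x), Finsupp.single (φw x i) (φc x i)

variable (R A) in
noncomputable def S0 : Submodule R (Free R A) :=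
  Submodule.span R
    ({z | ∃ a b : A, z = Finsupp.single (W.base (a + b)) 1
        - Finsupp.single (W.base a) 1 - Finsupp.single (W.base b) 1} ∪
     {z | ∃ (r : R) (a : A), z = Finsupp.single (W.base (r • a)) 1
        - Finsupp.single (W.base a) r})

def LinearCond (S : Submodule R (Free R A)) (I : Ideal R)
    (φw : R → ℕ → W R A) (φc : R → ℕ → R) (φn : R → ℕ) : Prop :=
  (∀ x ∈ I, ∀ y ∈ I, ev φw φc φn (x + y) - ev φw φc φn x - ev φw φc φn y ∈ S) ∧
  (∀ (r : R), ∀ x ∈ I, ev φw φc φn (r * x) - r • ev φw φc φn x ∈ S)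

def relSet (Q : ModuleCat.{u} R → Prop) (S : Submodule R (Free R A)) : Set (Free R A) :=
  {z | ∃ (I : Ideal R) (φw : R → ℕ → W R A) (φc : R → ℕ → R) (φn : R → ℕ),
      CopureIdeal Q I ∧ LinearCond S I φw φc φn ∧
      ∃ x ∈ I, z = Finsupp.single (W.node I φw φc φn) x - ev φw φc φn x}

variable (Q : ModuleCat.{u} R → Prop)

variable (A) in
noncomputable def SChain (γ : Ordinal.{u}) : Submodule R (Free R A) :=
  S0 R A ⊔ Submodule.span R (⋃ (β : Ordinal.{u}) (_ : β < γ), relSet Q (SChain β))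
termination_by γ

theorem SChain_eq (γ : Ordinal.{u}) :
    SChain A Q γ = S0 R A ⊔
      Submodule.span R (⋃ (β : Ordinal.{u}) (_ : β < γ), relSet Q (SChain A Q β)) := by
  rw [SChain]

theorem SChain_mono : Monotone (SChain A Q) := by
  intro β γ h
  rw [SChain_eq, SChain_eq]
  refine sup_le_sup le_rfl (Submodule.span_mono fun z hz => ?_)
  rw [Set.mem_iUnion] at hz ⊢
  obtain ⟨δ, hδ⟩ := hz
  rw [Set.mem_iUnion] at hδ
  obtain ⟨hδγ, hzz⟩ := hδ
  exact ⟨δ, Set.mem_iUnion.2 ⟨lt_of_lt_of_le hδγ h, hzz⟩⟩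

theorem S0_le_SChain (γ : Ordinal.{u}) : S0 R A ≤ SChain A Q γ := by
  rw [SChain_eq]; exact le_sup_left

theorem relSet_le_SChain {β γ : Ordinal.{u}} (h : β < γ) :
    relSet Q (SChain A Q β) ⊆ (SChain A Q γ : Set (Free R A)) := by
  intro z hz
  show z ∈ SChain A Q γ
  rw [SChain_eq]
  refine Submodule.mem_sup_right (Submodule.subset_span ?_)
  exact Set.mem_iUnion.2 ⟨β, Set.mem_iUnion.2 ⟨h, hz⟩⟩


theorem SChain_limit {lam : Ordinal.{u}} (h : Order.IsSuccLimit lam) :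
    SChain A Q lam = ⨆ β : {β : Ordinal.{u} // β < lam}, SChain A Q β.val := by
  apply le_antisymm
  · rw [SChain_eq]
    apply sup_le
    · exact le_trans (S0_le_SChain Q 0) (le_iSup (fun β : {β : Ordinal.{u} // β < lam} =>
        SChain A Q β.val) ⟨0, h.pos⟩)
    · rw [Submodule.span_le]
      intro z hz
      rw [Set.mem_iUnion] at hz
      obtain ⟨β, hβ⟩ := hz
      rw [Set.mem_iUnion] at hβ
      obtain ⟨hβlam, hzz⟩ := hβ
      have h1 : z ∈ SChain A Q (β + 1) := relSet_le_SChain Q (Order.lt_succ β) hzz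
      exact le_iSup (fun β : {β : Ordinal.{u} // β < lam} => SChain A Q β.val)
        ⟨β + 1, h.succ_lt hβlam⟩ h1
  · exact iSup_le fun β => SChain_mono Q (le_of_lt β.2)

theorem mem_SChain_limit {lam : Ordinal.{u}} (h : Order.IsSuccLimit lam) {v : Free R A}
    (hv : v ∈ SChain A Q lam) : ∃ β < lam, v ∈ SChain A Q β := by
  rw [SChain_limit Q h] at hv
  haveI : Nonempty {β : Ordinal.{u} // β < lam} := ⟨⟨0, h.pos⟩⟩
  have hdir : Directed (· ≤ ·) fun β : {β : Ordinal.{u} // β < lam} => SChain A Q β.val := by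
    intro i j
    refine ⟨⟨max i.val j.val, max_lt i.2 j.2⟩, SChain_mono Q (le_max_left _ _),
      SChain_mono Q (le_max_right _ _)⟩
  obtain ⟨β, hβ⟩ := (Submodule.mem_iSup_of_directed _ hdir).1 hv
  exact ⟨β.val, β.2, hβ⟩

theorem exists_rep (v : Free R A) : ∃ (n : ℕ) (w : ℕ → W R A) (c : ℕ → R),
    v = ∑ i ∈ Finset.range n, Finsupp.single (w i) (c i) := by
  induction v using Finsupp.induction with
  | zero => exact ⟨0, fun _ => W.base 0, fun _ => 0, by simp⟩
  | single_add a b f _ _ ih =>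
    obtain ⟨n, w, c, rfl⟩ := ih
    refine ⟨n + 1, fun i => Nat.rec a (fun j _ => w j) i, fun i => Nat.rec b (fun j _ => c j) i, ?_⟩
    rw [Finset.sum_range_succ']
    simp [add_comm]

section Psi

variable {M : Type u} [AddCommGroup M] [Module R M]

open Classical in
noncomputable def psi (g : A → M) : W R A → M
  | .base a => g a
  | .node I φw φc φn =>
    if h : ∃ m : M, ∀ x ∈ I,
        (∑ i ∈ Finset.range (φn x), φc x i • psi g (φw x i)) = x • m
    then h.choose else 0

theorem psi_base (g : A → M) (a : A) : psi (R := R) g (W.base a) = g a := rfl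

theorem psi_node (g : A → M) (I : Ideal R) (φw : R → ℕ → W R A) (φc : R → ℕ → R)
    (φn : R → ℕ)
    (hcond : ∃ m : M, ∀ x ∈ I,
      (∑ i ∈ Finset.range (φn x), φc x i • psi (R := R) g (φw x i)) = x • m) :
    ∀ x ∈ I, (∑ i ∈ Finset.range (φn x), φc x i • psi (R := R) g (φw x i))
      = x • psi (R := R) g (W.node I φw φc φn) := by
  intro x hx
  rw [psi.eq_2, dif_pos hcond]
  exact hcond.choose_spec x hx

noncomputable def Psi (g : A → M) : Free R A →ₗ[R] M :=
  Finsupp.lift M R (W R A) (psi g)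

theorem Psi_single (g : A → M) (w : W R A) (r : R) :
    Psi g (Finsupp.single w r) = r • psi g w := by
  simp [Psi, Finsupp.lift_apply, Finsupp.sum_single_index]

theorem Psi_ev (g : A → M) (φw : R → ℕ → W R A) (φc : R → ℕ → R) (φn : R → ℕ) (x : R) :
    Psi g (ev φw φc φn x) = ∑ i ∈ Finset.range (φn x), φc x i • psi g (φw x i) := by
  rw [ev, map_sum]
  exact Finset.sum_congr rfl fun i _ => Psi_single g _ _

theorem SChain_le_ker (g : A →ₗ[R] M)
    (hM : ∀ I : Ideal R, CopureIdeal Q I → ∀ ℓ : I →ₗ[R] M, ∃ m : M, ∀ x : I, ℓ x = (x : R) • m)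
    (γ : Ordinal.{u}) : SChain A Q γ ≤ LinearMap.ker (Psi (g : A → M)) := by
  induction γ using Ordinal.induction with
  | _ γ ih =>
  rw [SChain_eq]
  apply sup_le
  · rw [S0, Submodule.span_le]
    rintro z (⟨a, b, rfl⟩ | ⟨r, a, rfl⟩) <;>
      simp [LinearMap.mem_ker, Psi_single, psi_base, map_add, map_smul, sub_self]
  · rw [Submodule.span_le]
    intro z hz
    rw [Set.mem_iUnion] at hz
    obtain ⟨β, hβ⟩ := hz
    rw [Set.mem_iUnion] at hβ
    obtain ⟨hβγ, I, φw, φc, φn, hI, hlin, x, hxI, rfl⟩ := hβ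
    have hker := ih β hβγ
    set Φ : R → Free R A := ev φw φc φn with hΦ
    have hadd : ∀ x' ∈ I, ∀ y' ∈ I, Psi (g : A → M) (Φ (x' + y')) =
        Psi (g : A → M) (Φ x') + Psi (g : A → M) (Φ y') := by
      intro x' hx' y' hy'
      have h0 := LinearMap.mem_ker.mp (hker (hlin.1 x' hx' y' hy'))
      rw [map_sub, map_sub, sub_sub, sub_eq_zero] at h0
      exact h0
    have hsmul : ∀ (r : R), ∀ x' ∈ I, Psi (g : A → M) (Φ (r * x')) =
        r • Psi (g : A → M) (Φ x') := by
      intro r x' hx'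
      have h0 := LinearMap.mem_ker.mp (hker (hlin.2 r x' hx'))
      rw [map_sub, map_smul, sub_eq_zero] at h0
      exact h0
    set ℓ : I →ₗ[R] M :=
      { toFun := fun y => Psi (g : A → M) (Φ y.val)
        map_add' := fun y₁ y₂ => hadd y₁.val y₁.2 y₂.val y₂.2
        map_smul' := fun r y => hsmul r y.val y.2 } with hℓ
    obtain ⟨m, hm⟩ := hM I hI ℓ
    have hcond : ∃ m : M, ∀ x' ∈ I,
        (∑ i ∈ Finset.range (φn x'), φc x' i • psi (g : A → M) (φw x' i)) = x' • m := by
      refine ⟨m, fun x' hx' => ?_⟩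
      rw [← Psi_ev]
      exact hm ⟨x', hx'⟩
    rw [SetLike.mem_coe, LinearMap.mem_ker, map_sub, Psi_single, Psi_ev,
      psi_node (g : A → M) I φw φc φn hcond x hxI]
    exact sub_self _

end Psi

section Final

noncomputable def lam : Ordinal.{u} :=
  (Order.succ (Cardinal.mk R + Cardinal.aleph0)).ord

theorem lam_isLimit : Order.IsSuccLimit (lam (R := R)) :=
  Cardinal.isSuccLimit_ord (le_trans (self_le_add_left _ _) (Order.le_succ _))

variable (A) in
noncomputable abbrev BB : Type u := Free R A ⧸ SChain A Q (lam (R := R))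

variable (A) in
noncomputable def fmap : A →ₗ[R] BB A Q where
  toFun a := Submodule.Quotient.mk (Finsupp.single (W.base a) 1)
  map_add' a b := by
    rw [← sub_eq_zero, ← Submodule.Quotient.mk_add, ← Submodule.Quotient.mk_sub,
      Submodule.Quotient.mk_eq_zero]
    apply S0_le_SChain Q
    apply Submodule.subset_span
    left
    exact ⟨a, b, by abel⟩
  map_smul' r a := by
    rw [RingHom.id_apply, ← sub_eq_zero, ← Submodule.Quotient.mk_smul,
      ← Submodule.Quotient.mk_sub, Submodule.Quotient.mk_eq_zero]
    apply S0_le_SChain Q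
    apply Submodule.subset_span
    right
    exact ⟨r, a, by rw [Finsupp.smul_single, smul_eq_mul, mul_one]⟩

theorem exists_extend {M : Type u} [AddCommGroup M] [Module R M] (g : A →ₗ[R] M)
    (hM : ∀ I : Ideal R, CopureIdeal Q I → ∀ ℓ : I →ₗ[R] M, ∃ m : M, ∀ x : I, ℓ x = (x : R) • m) :
    ∃ h : BB A Q →ₗ[R] M, ∀ a : A, h (fmap A Q a) = g a := by
  refine ⟨Submodule.liftQ _ (Psi (g : A → M)) (SChain_le_ker Q g hM _), fun a => ?_⟩
  show Submodule.liftQ _ _ _ (Submodule.Quotient.mk _) = _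
  rw [Submodule.liftQ_apply, Psi_single, psi_base, one_smul]

theorem copureBaer : ∀ I : Ideal R, CopureIdeal Q I → ∀ g : I →ₗ[R] BB A Q,
    ∃ h : R →ₗ[R] BB A Q, ∀ x : I, h x = g x := by
  intro I hI g
  classical
  -- choose representatives
  have hrep : ∀ x : R, ∃ (nn : ℕ) (ww : ℕ → W R A) (cc : ℕ → R), ∀ hx : x ∈ I,
      Submodule.Quotient.mk (∑ i ∈ Finset.range nn, Finsupp.single (ww i) (cc i))
        = g ⟨x, hx⟩ := by
    intro x
    by_cases hx : x ∈ I
    · obtain ⟨v, hv⟩ := Submodule.Quotient.mk_surjective _ (g ⟨x, hx⟩)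
      obtain ⟨nn, ww, cc, rfl⟩ := exists_rep v
      exact ⟨nn, ww, cc, fun _ => hv⟩
    · exact ⟨0, fun _ => W.base 0, fun _ => 0, fun hx' => absurd hx' hx⟩
  choose n w c hw using hrep
  set φw : R → ℕ → W R A := fun x => w x with hφw
  -- the key relation : mk (ev w c n x) = g x for x ∈ I
  have hmk : ∀ (x : R) (hx : x ∈ I),
      Submodule.Quotient.mk (p := SChain A Q (lam (R := R))) (ev w c n x) = g ⟨x, hx⟩ :=
    fun x hx => hw x hx
  -- stage function
  have hstex : ∀ v : Free R A, ∃ β : Ordinal.{u}, β < lam (R := R) ∧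
      (v ∈ SChain A Q (lam (R := R)) → v ∈ SChain A Q β) := by
    intro v
    by_cases hv : v ∈ SChain A Q (lam (R := R))
    · obtain ⟨β, hβ, hmem⟩ := mem_SChain_limit Q lam_isLimit hv
      exact ⟨β, hβ, fun _ => hmem⟩
    · exact ⟨0, lam_isLimit.pos, fun h => absurd h hv⟩
  choose st hst_lt hst_mem using hstex
  -- constraints lie in SChain lam
  have hC1 : ∀ x ∈ I, ∀ y ∈ I,
      ev w c n (x + y) - ev w c n x - ev w c n y ∈ SChain A Q (lam (R := R)) := by
    intro x hx y hy
    rw [← Submodule.Quotient.mk_eq_zero, Submodule.Quotient.mk_sub, Submodule.Quotient.mk_sub,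
      hmk x hx, hmk y hy, hmk (x + y) (I.add_mem hx hy)]
    have : (⟨x + y, I.add_mem hx hy⟩ : I) = ⟨x, hx⟩ + ⟨y, hy⟩ := rfl
    rw [this, map_add]
    abel
  have hC2 : ∀ (r : R), ∀ x ∈ I,
      ev w c n (r * x) - r • ev w c n x ∈ SChain A Q (lam (R := R)) := by
    intro r x hx
    rw [← Submodule.Quotient.mk_eq_zero, Submodule.Quotient.mk_sub, Submodule.Quotient.mk_smul,
      hmk x hx, hmk (r * x) (I.smul_mem r hx)]
    have : (⟨r * x, I.smul_mem r hx⟩ : I) = r • ⟨x, hx⟩ := rfl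
    rw [this, map_smul]
    abel
  -- the uniform stage
  set T : ((R × R) ⊕ (R × R)) → Ordinal.{u} := Sum.elim
    (fun p => st (ev w c n (p.1 + p.2) - ev w c n p.1 - ev w c n p.2))
    (fun p => st (ev w c n (p.1 * p.2) - p.1 • ev w c n p.2)) with hT
  have hTlt : ∀ i, T i < lam (R := R) := by
    rintro (p | p) <;> exact hst_lt _
  set βs : Ordinal.{u} := iSup T with hβs
  have hβs_lt : βs < lam (R := R) := by
    apply Cardinal.iSup_lt_ord_of_isRegular
      (Cardinal.isRegular_succ (self_le_add_left _ _)) _ hTlt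
    have h1 : Cardinal.mk ((R × R) ⊕ (R × R)) ≤ Cardinal.mk R + Cardinal.aleph0 := by
      set cc : Cardinal.{u} := Cardinal.mk R + Cardinal.aleph0 with hcc
      have hinf : Cardinal.aleph0 ≤ cc := self_le_add_left _ _
      have hR : Cardinal.mk R ≤ cc := self_le_add_right _ _
      have hprod : Cardinal.mk (R × R) ≤ cc := by
        have := Cardinal.mk_prod (α := R) (β := R)
        simp only [Cardinal.lift_id] at this
        rw [this]
        calc Cardinal.mk R * Cardinal.mk R ≤ cc * cc := mul_le_mul' hR hR
        _ = cc := Cardinal.mul_eq_self hinf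
      calc Cardinal.mk ((R × R) ⊕ (R × R))
          = Cardinal.mk (R × R) + Cardinal.mk (R × R) := by
            have := Cardinal.mk_sum (α := (R × R)) (β := (R × R))
            simp only [Cardinal.lift_id] at this
            rw [this]
        _ ≤ cc + cc := add_le_add hprod hprod
        _ = cc := Cardinal.add_eq_self hinf
    exact lt_of_le_of_lt h1 (Order.lt_succ _)
  have hTβ : ∀ i, T i ≤ βs := fun i => le_ciSup (Ordinal.bddAbove_range T) i
  -- linearity condition at stage βs
  have hlin : LinearCond (SChain A Q βs) I w c n := by
    constructor
    · intro x hx y hy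
      exact SChain_mono Q (hTβ (Sum.inl (x, y))) (hst_mem _ (hC1 x hx y hy))
    · intro r x hx
      exact SChain_mono Q (hTβ (Sum.inr (r, x))) (hst_mem _ (hC2 r x hx))
  -- the node element
  set b : BB A Q := Submodule.Quotient.mk (Finsupp.single (W.node I w c n) 1) with hb
  refine ⟨LinearMap.toSpanSingleton R _ b, fun x => ?_⟩
  have hz : Finsupp.single (W.node I w c n) (x : R) - ev w c n (x : R)
      ∈ SChain A Q (lam (R := R)) :=
    relSet_le_SChain Q hβs_lt ⟨I, w, c, n, hI, hlin, x, x.2, rfl⟩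
  have : (x : R) • b = Submodule.Quotient.mk (Finsupp.single (W.node I w c n) (x : R)) := by
    rw [hb, ← Submodule.Quotient.mk_smul, Finsupp.smul_single, smul_eq_mul, mul_one]
  rw [LinearMap.toSpanSingleton_apply, this]
  have hx2 := x.2
  calc (Submodule.Quotient.mk (Finsupp.single (W.node I w c n) (x : R)) : BB A Q)
      = Submodule.Quotient.mk (ev w c n (x : R)) := by
        rw [← sub_eq_zero, ← Submodule.Quotient.mk_sub, Submodule.Quotient.mk_eq_zero]
        exact hz
    _ = g ⟨(x : R), hx2⟩ := hmk _ hx2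
    _ = g x := by congr
end Final

end CopureEmbed

open CategoryTheory

theorem embed_copure_in_copureBaerInjective [Ring R] (Q : ModuleCat.{u} R → Prop)
    (A : Type u) [AddCommGroup A] [Module R A] :
    ∃ (B : ModuleCat.{u} R) (f : A →ₗ[R] B), Function.Injective f ∧
      IsCopure Q f ∧ CopureBaerInjective Q B := by
  classical
  refine ⟨ModuleCat.of R (CopureEmbed.BB A Q), CopureEmbed.fmap A Q, ?_, ?_, ?_⟩
  · -- injectivity, via an embedding into an injective module
    let J := Injective.under (ModuleCat.of R A)
    let e : ModuleCat.of R A ⟶ J := Injective.ι _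
    have he : Function.Injective e := (ModuleCat.mono_iff_injective e).1 inferInstance
    haveI : CategoryTheory.Injective (ModuleCat.of R ↥J) :=
      inferInstanceAs (CategoryTheory.Injective J)
    haveI hJ : Module.Injective R ↥J := Module.injective_module_of_injective_object R ↥J
    let eL : A →ₗ[R] ↥J := e.hom
    have hM : ∀ I : Ideal R, CopureIdeal Q I → ∀ ℓ : I →ₗ[R] ↥J,
        ∃ m : ↥J, ∀ x : I, ℓ x = (x : R) • m := by
      intro I _ ℓ
      obtain ⟨hh, hhh⟩ := hJ.out I.subtype I.injective_subtype ℓ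
      refine ⟨hh 1, fun x => ?_⟩
      rw [← hhh x]
      show hh (x : R) = (x : R) • hh 1
      conv_lhs => rw [show ((x : R)) = (x : R) • (1 : R) by rw [smul_eq_mul, mul_one]]
      rw [map_smul]
    obtain ⟨h, hh⟩ := CopureEmbed.exists_extend Q eL hM
    intro a b hab
    apply he
    show eL a = eL b
    calc eL a = h (CopureEmbed.fmap A Q a) := (hh a).symm
      _ = h (CopureEmbed.fmap A Q b) := congrArg h hab
      _ = eL b := hh b
  · -- copurity
    intro M hQM g
    have hM : ∀ I : Ideal R, CopureIdeal Q I → ∀ ℓ : I →ₗ[R] ↥M,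
        ∃ m : ↥M, ∀ x : I, ℓ x = (x : R) • m := by
      intro I hI ℓ
      obtain ⟨hh, hhh⟩ := hI M hQM ℓ
      refine ⟨hh 1, fun x => ?_⟩
      rw [← hhh x]
      conv_lhs => rw [show ((x : R)) = (x : R) • (1 : R) by rw [smul_eq_mul, mul_one]]
      rw [map_smul]
    exact CopureEmbed.exists_extend Q g hM
  · -- copure Baer injectivity
    exact CopureEmbed.copureBaer Q
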